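/- arXiv:2401.04987 — 6 statements merged into one kernel-verified Lean document; each statement's English description precedes it below -/
import Mathlib

section
/- Let R be a commutative noetherian local ring and M a finitely generated R-module. Then ⋂_{m>0, N ∈ mod(R)} ann_R(Ext_R^m(M,N)) = ann_R(Ext_R^1(M, ΩM)) = ann_R(stableHom_R(M,M)), where ΩM is the first syzygy of M in a minimal free resolution and stableHom_R(M,M) = Hom_R(M,M)/P_R(M,M) with P_R(M,M) the submodule of endomorphisms factoring through a projective module. -/
open CategoryTheory IsLocalRing

universe u

variable (R : Type u) [CommRing R]

/-- The submodule of `Hom_R(M,N)` consisting of maps factoring through a projective module. -/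
def projStable (M N : Type u) [AddCommGroup M] [Module R M] [AddCommGroup N] [Module R N] :
    Submodule R (M →ₗ[R] N) where
  carrier := {f | ∃ (P : Type u) (_ : AddCommGroup P) (_ : Module R P)
    (_ : Module.Projective R P) (g : M →ₗ[R] P) (h : P →ₗ[R] N), f = h.comp g}
  zero_mem' := ⟨PUnit, inferInstance, inferInstance, inferInstance, 0, 0, by ext x; simp⟩
  add_mem' := by
    rintro f f' ⟨P, _, _, _, g, h, rfl⟩ ⟨P', _, _, _, g', h', rfl⟩
    exact ⟨P × P', inferInstance, inferInstance, inferInstance, g.prod g',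
      h.comp (LinearMap.fst R P P') + h'.comp (LinearMap.snd R P P'), by ext x; simp⟩
  smul_mem' := by
    rintro r f ⟨P, _, _, _, g, h, rfl⟩
    exact ⟨P, inferInstance, inferInstance, inferInstance, g, r • h, by ext x; simp⟩

/-- The stable hom module `Hom_R(M,N)/P_R(M,N)`. -/
def stableHom (M N : Type u) [AddCommGroup M] [Module R M] [AddCommGroup N] [Module R N] :=
  (M →ₗ[R] N) ⧸ projStable R M N

noncomputable instance (M N : Type u) [AddCommGroup M] [Module R M] [AddCommGroup N]
    [Module R N] : AddCommGroup (stableHom R M N) :=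
  inferInstanceAs (AddCommGroup ((M →ₗ[R] N) ⧸ projStable R M N))

noncomputable instance (M N : Type u) [AddCommGroup M] [Module R M] [AddCommGroup N]
    [Module R N] : Module R (stableHom R M N) :=
  inferInstanceAs (Module R ((M →ₗ[R] N) ⧸ projStable R M N))

/-- `Ann(M)`: the annihilator of the stable endomorphism module of `M`. -/
noncomputable def stAnn (M : Type u) [AddCommGroup M] [Module R M] : Ideal R :=
  Module.annihilator R (stableHom R M M)

/-- `Ext_R^n(M,N)` as an `R`-module. -/
noncomputable abbrev ExtM (n : ℕ) (M : ModuleCat.{u} R) (N : ModuleCat.{u} R) :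
    ModuleCat.{u} R :=
  ((Ext R (ModuleCat.{u} R) n).obj (Opposite.op M)).obj N

/-- `ca^n(R)`, the `n`-th cohomology annihilator ideal. -/
noncomputable def ca (n : ℕ) : Ideal R :=
  ⨅ (m : ℕ) (_ : n ≤ m) (M : ModuleCat.{u} R) (N : ModuleCat.{u} R)
    (_ : Module.Finite R M) (_ : Module.Finite R N),
    Module.annihilator R (ExtM R m M N)


noncomputable section
open CategoryTheory Limits
namespace CohAnn
variable {R : Type u} [CommRing R]

lemma smul_homology_zero (S : ShortComplex (ModuleCat.{u} R)) (r : R)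
    (H : ∀ (f : S.X₂), S.g f = 0 → ∃ t, S.f t = r • f) (y : S.homology) : r • y = 0 := by
  have key : ∀ z : (LinearMap.ker S.g.hom ⧸ LinearMap.range S.moduleCatToCycles), r • z = 0 := by
    intro z
    obtain ⟨⟨f, hf⟩, rfl⟩ := Submodule.Quotient.mk_surjective _ z
    rw [← Submodule.Quotient.mk_smul, Submodule.Quotient.mk_eq_zero]
    obtain ⟨t, ht⟩ := H f hf
    exact ⟨t, Subtype.ext ht⟩
  have h1 : r • (S.moduleCatHomologyIso.hom y) = 0 := key _
  have : S.moduleCatHomologyIso.inv (S.moduleCatHomologyIso.hom y) = y := by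
    show (S.moduleCatHomologyIso.hom ≫ S.moduleCatHomologyIso.inv) y = y
    rw [Iso.hom_inv_id]; rfl
  calc r • y = S.moduleCatHomologyIso.inv (r • S.moduleCatHomologyIso.hom y) := by
        rw [map_smul, this]
    _ = 0 := by rw [h1, map_zero]

lemma exists_of_smul_homology_zero (S : ShortComplex (ModuleCat.{u} R)) (r : R)
    (hz : ∀ y : S.homology, r • y = 0) (f : S.X₂) (hf : S.g f = 0) :
    ∃ t, S.f t = r • f := by
  have key : ∀ z : S.moduleCatLeftHomologyData.H, r • z = 0 := by
    intro z
    have h1 := hz (S.moduleCatHomologyIso.inv z)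
    have h2 : S.moduleCatHomologyIso.hom (S.moduleCatHomologyIso.inv z) = z := by
      show (S.moduleCatHomologyIso.inv ≫ S.moduleCatHomologyIso.hom) z = z
      rw [Iso.inv_hom_id]; rfl
    calc r • z = S.moduleCatHomologyIso.hom (r • S.moduleCatHomologyIso.inv z) := by
          rw [map_smul, h2]
      _ = 0 := by rw [h1, map_zero]
  have : r • (Submodule.Quotient.mk ⟨f, hf⟩ :
      LinearMap.ker S.g.hom ⧸ LinearMap.range S.moduleCatToCycles) = 0 := key _
  rw [← Submodule.Quotient.mk_smul, Submodule.Quotient.mk_eq_zero] at this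
  obtain ⟨t, ht⟩ := this
  exact ⟨t, congrArg Subtype.val ht⟩

/-- transfer `r • = 0` along an iso of modules -/
lemma smul_zero_of_iso {A B : ModuleCat.{u} R} (e : A ≅ B) (r : R)
    (h : ∀ b : B, r • b = 0) (a : A) : r • a = 0 := by
  have h2 : e.inv (e.hom a) = a := by
    show (e.hom ≫ e.inv) a = a
    rw [Iso.hom_inv_id]; rfl
  calc r • a = e.inv (r • e.hom a) := by rw [map_smul, h2]
    _ = 0 := by rw [h (e.hom a), map_zero]

variable (F X : ModuleCat.{u} R) (πF : F ⟶ X) [Projective F] [Epi πF]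

def resComplex : ChainComplex (ModuleCat.{u} R) ℕ :=
  ChainComplex.mk' F (Projective.syzygies πF) (Projective.d πF)
    (fun f => ⟨_, Projective.d f, by erw [Category.assoc, kernel.condition, comp_zero]⟩)

set_option linter.unusedSectionVars false

lemma resComplex_d_1_0 : (resComplex F X πF).d 1 0 = Projective.d πF := by
  simp [resComplex]

lemma resComplex_exactAt_succ (n : ℕ) : (resComplex F X πF).ExactAt (n + 1) := by
  rw [HomologicalComplex.exactAt_iff' _ (n + 1 + 1) (n + 1) n (by simp) (by simp)]
  let e := (ChainComplex.mk'XIso (V := ModuleCat.{u} R) _ _ _ _ n :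
    (resComplex F X πF).X (n + 2) ≅ _)
  have hd : (resComplex F X πF).d (n + 2) (n + 1) =
      e.hom ≫ Projective.d ((resComplex F X πF).d (n + 1) n) :=
    ChainComplex.mk'_d (V := ModuleCat.{u} R) _ _ _ _ n
  refine ShortComplex.exact_of_iso ?_ (exact_d_f ((resComplex F X πF).d (n + 1) n))
  refine ShortComplex.isoMk e.symm (Iso.refl _) (Iso.refl _) ?_ ?_
  · exact (show e.inv ≫ (resComplex F X πF).d (n + 2) (n + 1) = _ by
      rw [hd]; exact Iso.inv_hom_id_assoc e _).trans (Category.comp_id _).symm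
  · exact (Category.id_comp _).trans (Category.comp_id _).symm

instance resComplex_projective (n : ℕ) : Projective ((resComplex F X πF).X n) := by
  obtain (_ | _ | _ | n) := n
  · exact ‹Projective F›
  · apply Projective.projective_over
  · apply Projective.projective_over
  · apply Projective.projective_over

lemma resComplex_d_comp_π : (resComplex F X πF).d 1 0 ≫ πF = 0 := by
  erw [resComplex_d_1_0, Projective.d, Category.assoc, kernel.condition, comp_zero]

abbrev res : ProjectiveResolution X where
  complex := resComplex F X πF
  π := (ChainComplex.toSingle₀Equiv _ _).symm ⟨πF, resComplex_d_comp_π F X πF⟩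
  quasiIso := ⟨fun n => by
    cases n with
    | zero =>
      rw [ChainComplex.quasiIsoAt₀_iff, ShortComplex.quasiIso_iff_of_zeros']
      · refine (ShortComplex.exact_and_epi_g_iff_of_iso ?_).2
          ⟨exact_d_f πF, by dsimp; infer_instance⟩
        exact ShortComplex.isoMk (Iso.refl _) (Iso.refl _) (Iso.refl _)
          (by exact (Category.id_comp _).trans (Category.comp_id _).symm)
          (by exact (Category.id_comp _).trans (Category.comp_id _).symm)
      all_goals rfl
    | succ n =>
      rw [quasiIsoAt_iff_exactAt']
      · apply resComplex_exactAt_succ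
      · apply ChainComplex.exactAt_succ_single_obj⟩

lemma res_π_f_zero : (res F X πF).π.f 0 = πF := by
  simp [res, ChainComplex.toSingle₀Equiv_symm_apply_f_zero]
  exact ChainComplex.toSingle₀Equiv_symm_apply_f_zero _ _

section Smul
variable (r : R) (Pm : ModuleCat.{u} R) [Projective Pm] (g : X ⟶ Pm) (h : Pm ⟶ X)
  (hgh : g ≫ h = r • 𝟙 X)

/-- chain map lifting `r • 𝟙 X`, vanishing in positive degrees -/
def sMap : resComplex F X πF ⟶ resComplex F X πF where
  f i := match i with
    | 0 => πF ≫ g ≫ (Projective.factorThru h πF : Pm ⟶ F)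
    | _ + 1 => 0
  comm' i j hij := by
    rcases j with _ | j
    · obtain rfl : i = 1 := hij.symm
      show (0 : (resComplex F X πF).X 1 ⟶ _) ≫ _ =
        (resComplex F X πF).d 1 0 ≫ (πF ≫ g ≫ Projective.factorThru h πF)
      erw [zero_comp, resComplex_d_1_0]
      show (0 : _ ⟶ _) = (Projective.π (kernel πF) ≫ kernel.ι πF) ≫
        (πF ≫ g ≫ Projective.factorThru h πF)
      erw [Category.assoc, kernel.condition_assoc, zero_comp, comp_zero]
    · obtain rfl : i = j + 2 := hij.symm
      show (0 : _ ⟶ _) ≫ _ = _ ≫ (0 : _ ⟶ _)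
      rw [zero_comp, comp_zero]

/-- chain map `r • 𝟙` -/
def ρMap : resComplex F X πF ⟶ resComplex F X πF where
  f i := r • 𝟙 _
  comm' i j hij := by rw [Linear.smul_comp, Linear.comp_smul, Category.id_comp, Category.comp_id]

include hgh in
lemma sMap_lift : sMap F X πF Pm g h ≫ (res F X πF).π =
    (res F X πF).π ≫ (ChainComplex.single₀ (ModuleCat.{u} R)).map (r • 𝟙 X) := by
  apply (ChainComplex.toSingle₀Equiv _ _).injective
  apply Subtype.ext
  rw [ChainComplex.toSingle₀Equiv_apply_coe, ChainComplex.toSingle₀Equiv_apply_coe,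
    HomologicalComplex.comp_f, HomologicalComplex.comp_f, res_π_f_zero,
    ChainComplex.single₀_map_f_zero]
  show (πF ≫ g ≫ Projective.factorThru h πF) ≫ πF = πF ≫ (r • 𝟙 X)
  rw [Category.assoc, Category.assoc, Projective.factorThru_comp, hgh]

lemma ρMap_lift : ρMap F X πF r ≫ (res F X πF).π =
    (res F X πF).π ≫ (ChainComplex.single₀ (ModuleCat.{u} R)).map (r • 𝟙 X) := by
  apply (ChainComplex.toSingle₀Equiv _ _).injective
  apply Subtype.ext
  rw [ChainComplex.toSingle₀Equiv_apply_coe, ChainComplex.toSingle₀Equiv_apply_coe,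
    HomologicalComplex.comp_f, HomologicalComplex.comp_f,
    ChainComplex.single₀_map_f_zero]
  have key : ∀ {A B : ModuleCat.{u} R} (f : A ⟶ B), (r • 𝟙 A) ≫ f = f ≫ (r • 𝟙 B) := by
    intro A B f
    rw [Linear.smul_comp, Linear.comp_smul, Category.id_comp, Category.comp_id]
  exact key _

end Smul

section KeyC
variable (r : R) (Pm : ModuleCat.{u} R) [Projective Pm] (g : X ⟶ Pm) (h : Pm ⟶ X)
  (hgh : g ≫ h = r • 𝟙 X)

include F πF hgh in
lemma smul_ext_zero (m : ℕ) (N : ModuleCat.{u} R)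
    (x : ((Ext R (ModuleCat.{u} R) (m + 1)).obj (Opposite.op X)).obj N) : r • x = 0 := by
  set P := res F X πF with hP
  set T := P.complex.linearYonedaObj R N with hT
  have E : ((Ext R (ModuleCat.{u} R) (m+1)).obj (Opposite.op X)).obj N ≅ T.homology (m+1) :=
    P.isoExt (m+1) N
  have E2 : T.homology (m+1) ≅ (T.sc' m (m+1) (m+2)).homology :=
    ShortComplex.homologyMapIso (T.isoSc' m (m+1) (m+2) (by simp) (by simp))
  refine smul_zero_of_iso (E ≪≫ E2) r ?_ x
  intro b
  refine smul_homology_zero _ r ?_ b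
  intro (f : P.complex.X (m+1) ⟶ N) hf
  have hf' : P.complex.d (m+2) (m+1) ≫ (f : P.complex.X (m+1) ⟶ N) = 0 := hf
  have χ := ProjectiveResolution.liftHomotopy (P := res F X πF) (Q := res F X πF) (r • 𝟙 X) (sMap F X πF Pm g h) (ρMap F X πF r)
      (sMap_lift F X πF r Pm g h hgh) (ρMap_lift F X πF r)
  have hcomm := χ.comm (m+1)
  rw [dNext_eq χ.hom (show (ComplexShape.down ℕ).Rel (m+1) m by simp),
      prevD_eq χ.hom (show (ComplexShape.down ℕ).Rel (m+2) (m+1) by simp)] at hcomm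
  have hs0 : (sMap F X πF Pm g h).f (m+1) = 0 := rfl
  have hρ : (ρMap F X πF r).f (m+1) = r • 𝟙 (P.complex.X (m+1)) := rfl
  rw [hs0, hρ] at hcomm
  have hr1 : (r • 𝟙 (P.complex.X (m+1))) =
      -(P.complex.d (m+1) m ≫ χ.hom m (m+1) +
        χ.hom (m+1) (m+2) ≫ P.complex.d (m+2) (m+1)) :=
    eq_neg_of_add_eq_zero_right hcomm.symm
  refine ⟨-(χ.hom m (m+1) ≫ f), ?_⟩
  show P.complex.d (m+1) m ≫ (-(χ.hom m (m+1) ≫ f)) = r • f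
  have hrf : (r • f : P.complex.X (m+1) ⟶ N) = (r • 𝟙 (P.complex.X (m+1))) ≫ f := by
    rw [Linear.smul_comp, Category.id_comp]
  rw [hrf, hr1, Preadditive.neg_comp, Preadditive.add_comp, Category.assoc, Category.assoc,
    hf', comp_zero, add_zero, Preadditive.comp_neg]
end KeyC

section KeyB
variable (M : Type u) [AddCommGroup M] [Module R M]

lemma factor_of_ann (n : ℕ) (π : (Fin n → R) →ₗ[R] M) (hsurj : Function.Surjective π) (r : R)
    (hr : ∀ x : ((Ext R (ModuleCat.{u} R) 1).obj
        (Opposite.op (ModuleCat.of R M))).obj (ModuleCat.of R ↥(LinearMap.ker π)),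
      r • x = 0) :
    ∃ h : M →ₗ[R] (Fin n → R), π ∘ₗ h = r • (LinearMap.id : M →ₗ[R] M) := by
  set F : ModuleCat.{u} R := ModuleCat.of R (Fin n → R) with hF
  set X : ModuleCat.{u} R := ModuleCat.of R M with hX
  set K : ModuleCat.{u} R := ModuleCat.of R ↥(LinearMap.ker π) with hK
  let πF : F ⟶ X := ModuleCat.ofHom π
  haveI : Epi πF := (ModuleCat.epi_iff_surjective πF).2 hsurj
  haveI : Projective F := (IsProjective.iff_projective (R := R) (P := Fin n → R)).1 inferInstance
  set P := res F X πF with hP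
  set T := P.complex.linearYonedaObj R K with hT
  have E : ((Ext R (ModuleCat.{u} R) 1).obj (Opposite.op X)).obj K ≅ T.homology 1 :=
    P.isoExt 1 K
  have E2 : T.homology 1 ≅ (T.sc' 0 1 2).homology :=
    ShortComplex.homologyMapIso (T.isoSc' 0 1 2 (by simp) (by simp))
  -- the cocycle q : P.complex.X 1 ⟶ K
  have hmem : ∀ v : P.complex.X 1, P.complex.d 1 0 v ∈ LinearMap.ker π := by
    intro v
    have := ConcreteCategory.congr_hom (resComplex_d_comp_π F X πF) v
    exact this
  let q : P.complex.X 1 ⟶ K := ModuleCat.ofHom (LinearMap.codRestrict (LinearMap.ker π)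
    (P.complex.d 1 0).hom hmem)
  have hd10 : (P.complex.d 1 0 : P.complex.X 1 ⟶ F) =
      Projective.π (kernel πF) ≫ kernel.ι πF := resComplex_d_1_0 F X πF
  have hqsurj : Function.Surjective q := by
    rintro ⟨y, hy⟩
    have hepi : Function.Surjective (Projective.π (kernel πF)) :=
      (ModuleCat.epi_iff_surjective _).1 inferInstance
    obtain ⟨v, hv⟩ := hepi ((ModuleCat.kernelIsoKer πF).inv ⟨y, hy⟩)
    refine ⟨v, Subtype.ext ?_⟩
    show P.complex.d 1 0 v = y
    rw [hd10]
    show kernel.ι πF (Projective.π (kernel πF) v) = y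
    rw [hv]
    exact ConcreteCategory.congr_hom (ModuleCat.kernelIsoKer_inv_kernel_ι πF) ⟨y, hy⟩
  -- q is a cocycle
  have hq : (T.sc' 0 1 2).g q = 0 := by
    show P.complex.d 2 1 ≫ q = 0
    ext v : 2
    refine Subtype.ext ?_
    show (P.complex.d 2 1 ≫ P.complex.d 1 0) v = ((0 : P.complex.X 2 ⟶ F)) v
    rw [P.complex.d_comp_d]
    rfl
  -- all homology elements are killed by r
  have hz : ∀ y : (T.sc' 0 1 2).homology, r • y = 0 := by
    refine smul_zero_of_iso (E ≪≫ E2).symm r ?_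
    exact hr
  obtain ⟨t0, ht⟩ := exists_of_smul_homology_zero _ r hz q hq
  let t : P.complex.X 0 ⟶ K := t0
  let tk : (Fin n → R) →ₗ[R] ↥(LinearMap.ker π) := t.hom
  have ht' : (P.complex.d 1 0 ≫ t) = r • q := ht
  have tsub : ∀ y : ↥(LinearMap.ker π), tk ((LinearMap.ker π).subtype y) = r • y := by
    intro y
    obtain ⟨v, hv⟩ := hqsurj y
    have h1 : ((LinearMap.ker π).subtype y : Fin n → R) = P.complex.d 1 0 v := by
      rw [← hv]; rfl
    calc tk ((LinearMap.ker π).subtype y)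
        = t (P.complex.d 1 0 v) := by rw [h1]; rfl
      _ = (P.complex.d 1 0 ≫ t) v := rfl
      _ = (r • q) v := by rw [ht']
      _ = r • (q v) := rfl
      _ = r • y := by rw [hv]
  -- build the factorization
  let σ : (Fin n → R) →ₗ[R] (Fin n → R) :=
    r • LinearMap.id - (LinearMap.ker π).subtype ∘ₗ tk
  have hle : LinearMap.ker π ≤ LinearMap.ker σ := by
    intro x hx
    have h2 : tk x = r • (⟨x, hx⟩ : ↥(LinearMap.ker π)) := tsub ⟨x, hx⟩
    have hσ : σ x = r • x - (tk x : Fin n → R) := rfl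
    rw [LinearMap.mem_ker, hσ, h2]
    simp
  let e := LinearMap.quotKerEquivOfSurjective π hsurj
  have he : ∀ x : Fin n → R, e (Submodule.Quotient.mk x) = π x := fun _ => rfl
  let h : M →ₗ[R] (Fin n → R) :=
    ((LinearMap.ker π).liftQ σ hle) ∘ₗ (e.symm : M →ₗ[R] ((Fin n → R) ⧸ LinearMap.ker π))
  refine ⟨h, ?_⟩
  ext m
  obtain ⟨x, rfl⟩ := hsurj m
  have hsymm : e.symm (π x) = Submodule.Quotient.mk x := by
    apply e.injective
    rw [LinearEquiv.apply_symm_apply, he]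
  show π (h (π x)) = r • π x
  have : h (π x) = σ x := by
    show ((LinearMap.ker π).liftQ σ hle) (e.symm (π x)) = σ x
    rw [hsymm, Submodule.liftQ_apply]
  rw [this]
  have hσ : σ x = r • x - (tk x : Fin n → R) := rfl
  rw [hσ, map_sub, map_smul]
  rw [show π (tk x : Fin n → R) = 0 from (tk x).2, sub_zero]

end KeyB
end CohAnn

end

/-- For a finitely generated module `M` over a noetherian local ring `R`,
with `ΩM` the first syzygy in a minimal free resolution (the kernel of a minimal free
cover `π : Rⁿ → M`), the intersection `⋂_{m>0, N fg} ann Ext^m(M,N)` equals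
`ann Ext^1(M, ΩM)` and equals `ann stableHom(M,M)`. -/
theorem stmt1 [IsNoetherianRing R] [IsLocalRing R]
    (M : Type u) [AddCommGroup M] [Module R M] [Module.Finite R M]
    (n : ℕ) (π : (Fin n → R) →ₗ[R] M) (hsurj : Function.Surjective π)
    (hmin : LinearMap.ker π ≤ (maximalIdeal R) • (⊤ : Submodule R (Fin n → R))) :
    (⨅ (m : ℕ) (_ : 0 < m) (N : ModuleCat.{u} R) (_ : Module.Finite R N),
        Module.annihilator R (ExtM R m (ModuleCat.of R M) N))
      = Module.annihilator R
          (ExtM R 1 (ModuleCat.of R M) (ModuleCat.of R (LinearMap.ker π))) ∧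
    Module.annihilator R
        (ExtM R 1 (ModuleCat.of R M) (ModuleCat.of R (LinearMap.ker π)))
      = Module.annihilator R (stableHom R M M) := by
  classical
  haveI : IsNoetherian R (Fin n → R) := inferInstance
  haveI hKfin : Module.Finite R ↥(LinearMap.ker π) :=
    Module.Finite.iff_fg.2 (IsNoetherian.noetherian _)
  set L : Ideal R := ⨅ (m : ℕ) (_ : 0 < m) (N : ModuleCat.{u} R) (_ : Module.Finite R N),
      Module.annihilator R (ExtM R m (ModuleCat.of R M) N) with hL
  set A : Ideal R := Module.annihilator R
      (ExtM R 1 (ModuleCat.of R M) (ModuleCat.of R (LinearMap.ker π))) with hA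
  set B : Ideal R := Module.annihilator R (stableHom R M M) with hB
  -- L ≤ A
  have hLA : L ≤ A := by
    refine le_trans (iInf_le _ 1) ?_
    refine le_trans (iInf_le _ one_pos) ?_
    refine le_trans (iInf_le _ (ModuleCat.of R ↥(LinearMap.ker π))) ?_
    exact iInf_le _ hKfin
  -- A ≤ B
  have hAB : A ≤ B := by
    intro r hr
    have hr' : ∀ x : ((Ext R (ModuleCat.{u} R) 1).obj
        (Opposite.op (ModuleCat.of R M))).obj (ModuleCat.of R ↥(LinearMap.ker π)), r • x = 0 :=
      Module.mem_annihilator.1 hr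
    obtain ⟨h, hh⟩ := CohAnn.factor_of_ann M n π hsurj r hr'
    rw [hB, Module.mem_annihilator]
    intro y
    have key : ∀ z : (M →ₗ[R] M) ⧸ projStable R M M, r • z = 0 := by
      intro z
      obtain ⟨f, rfl⟩ := Submodule.Quotient.mk_surjective _ z
      rw [← Submodule.Quotient.mk_smul, Submodule.Quotient.mk_eq_zero]
      refine ⟨Fin n → R, inferInstance, inferInstance, inferInstance, h, f ∘ₗ π, ?_⟩
      ext x
      have hx := DFunLike.congr_fun hh x
      simp only [LinearMap.comp_apply] at hx ⊢
      rw [hx]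
      simp
    exact key y
  -- B ≤ L
  have hBL : B ≤ L := by
    intro r hr
    have h1 : r • (Submodule.Quotient.mk (LinearMap.id : M →ₗ[R] M) :
        (M →ₗ[R] M) ⧸ projStable R M M) = 0 :=
      Module.mem_annihilator.1 hr _
    rw [← Submodule.Quotient.mk_smul, Submodule.Quotient.mk_eq_zero] at h1
    obtain ⟨P, iAG, iMod, iProj, g0, h0, hfact⟩ := h1
    rw [hL, Ideal.mem_iInf]
    intro m
    rw [Ideal.mem_iInf]
    intro hm
    rw [Ideal.mem_iInf]
    intro N
    rw [Ideal.mem_iInf]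
    intro _
    obtain ⟨k, rfl⟩ : ∃ k, m = k + 1 := ⟨m - 1, (Nat.succ_pred_eq_of_pos hm).symm⟩
    set F : ModuleCat.{u} R := ModuleCat.of R (Fin n → R) with hF
    set X : ModuleCat.{u} R := ModuleCat.of R M with hX
    let πF : F ⟶ X := ModuleCat.ofHom π
    haveI : CategoryTheory.Epi πF := (ModuleCat.epi_iff_surjective πF).2 hsurj
    haveI : CategoryTheory.Projective F :=
      (IsProjective.iff_projective (R := R) (P := Fin n → R)).1 inferInstance
    set Pm : ModuleCat.{u} R := ModuleCat.of R P with hPm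
    haveI : CategoryTheory.Projective Pm := (IsProjective.iff_projective P).1 iProj
    let g : X ⟶ Pm := ModuleCat.ofHom g0
    let h : Pm ⟶ X := ModuleCat.ofHom h0
    have hgh : g ≫ h = r • 𝟙 X := by
      ext x; simpa [g, h] using (LinearMap.congr_fun hfact x).symm
    rw [Module.mem_annihilator]
    intro x
    exact CohAnn.smul_ext_zero F X πF r Pm g h hgh k N x
  exact ⟨le_antisymm hLA (hAB.trans hBL), le_antisymm hAB (hBL.trans hLA)⟩
end

section
/- Let R be a Gorenstein local ring, r ∈ R, and let ⋯ → R^n →^ψ R^n →^φ R^n →^ψ ⋯ be an exact sequence of free R-modules with M = coker φ. If there exist R-homomorphisms α, β : R^n → R^n with φ∘α + β∘ψ = r·I_n, then r annihilates stableHom_R(M,M). -/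
open CategoryTheory IsLocalRing

universe u

variable (R : Type u) [CommRing R]

/-- A Gorenstein local ring: a noetherian local ring which has finite injective dimension
over itself, expressed by eventual vanishing of `Ext^i(R/m, R)`. -/
def IsGorensteinLocalRing : Prop :=
  IsNoetherianRing R ∧ IsLocalRing R ∧ ∃ n : ℕ, ∀ (I : Ideal R), I.IsMaximal →
    ∀ i : ℕ, n < i →
      Subsingleton (ExtM R i (ModuleCat.of R (R ⧸ I)) (ModuleCat.of R R))

/-- Let `R` be a Gorenstein local ring, `r ∈ R`, and
`⋯ → Rⁿ --ψ--> Rⁿ --φ--> Rⁿ --ψ--> ⋯` an exact 2-periodic sequence of free modules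
with `M = coker φ`. If there are `α, β : Rⁿ → Rⁿ` with `φ∘α + β∘ψ = r·Iₙ`, then `r`
annihilates `stableHom_R(M,M)`. -/
theorem stmt4 (hGor : IsGorensteinLocalRing R) (r : R) (n : ℕ)
    (φ ψ : (Fin n → R) →ₗ[R] (Fin n → R))
    (hex1 : Function.Exact ψ φ) (hex2 : Function.Exact φ ψ)
    (α β : (Fin n → R) →ₗ[R] (Fin n → R))
    (hfac : φ ∘ₗ α + β ∘ₗ ψ = r • LinearMap.id) :
    r ∈ stAnn R ((Fin n → R) ⧸ LinearMap.range φ) := by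

  classical
  set M := (Fin n → R) ⧸ LinearMap.range φ with hM
  have hker : LinearMap.ker ψ = LinearMap.range φ := (LinearMap.exact_iff).mp hex2
  let π : (Fin n → R) →ₗ[R] M := (LinearMap.range φ).mkQ
  let ψbar : M →ₗ[R] (Fin n → R) := (LinearMap.range φ).liftQ ψ (le_of_eq hker.symm)
  rw [stAnn, Module.mem_annihilator]
  intro m
  obtain ⟨f, rfl⟩ := Submodule.Quotient.mk_surjective (projStable R M M) m
  show r • (Submodule.Quotient.mk f : (M →ₗ[R] M) ⧸ projStable R M M) = 0
  rw [← Submodule.Quotient.mk_smul, Submodule.Quotient.mk_eq_zero]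
  refine ⟨Fin n → R, inferInstance, inferInstance, inferInstance, ψbar, f ∘ₗ π ∘ₗ β, ?_⟩
  apply LinearMap.ext
  intro x
  obtain ⟨y, rfl⟩ := Submodule.Quotient.mk_surjective (LinearMap.range φ) x
  have hy : (φ ∘ₗ α + β ∘ₗ ψ) y = r • y := by rw [hfac]; simp
  have key : ((f ∘ₗ π ∘ₗ β) ∘ₗ ψbar) (Submodule.Quotient.mk y)
      = f (Submodule.Quotient.mk (β (ψ y))) := rfl
  rw [LinearMap.smul_apply, key]
  have h2 : (Submodule.Quotient.mk (β (ψ y)) : M) = r • Submodule.Quotient.mk y := by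
    rw [← Submodule.Quotient.mk_smul, Submodule.Quotient.eq]
    refine ⟨-(α y), ?_⟩
    have := hy
    simp only [LinearMap.add_apply, LinearMap.comp_apply] at this
    rw [map_neg]
    linear_combination (norm := module) -this
  rw [h2, map_smul]
end

section
/- Let R = k⟦x,y⟧/(x²) where k is a field. Then the annihilator of the stable endomorphism module of the module R/xR equals the ideal xR. -/
open CategoryTheory IsLocalRing

universe u

variable (R : Type u) [CommRing R]

/-- The one-dimensional A-infinity hypersurface `k⟦x,y⟧/(x²)`. -/
noncomputable abbrev Ainf (k : Type u) [Field k] : Type u :=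
  (MvPowerSeries (Fin 2) k) ⧸
    (Ideal.span {(MvPowerSeries.X (0 : Fin 2) : MvPowerSeries (Fin 2) k) ^ 2})

/-- The image of `x` in `k⟦x,y⟧/(x²)`. -/
noncomputable def ax (k : Type u) [Field k] : Ainf k :=
  Ideal.Quotient.mk _ (MvPowerSeries.X 0)

/-- The image of `y` in `k⟦x,y⟧/(x²)`. -/
noncomputable def ay (k : Type u) [Field k] : Ainf k :=
  Ideal.Quotient.mk _ (MvPowerSeries.X 1)

section Aux

variable (k : Type u) [Field k]

lemma ax_mul_eq_zero {a : Ainf k} (h : ax k * a = 0) : a ∈ Ideal.span {ax k} := by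
  obtain ⟨A, rfl⟩ := Ideal.Quotient.mk_surjective a
  rw [ax, ← map_mul, Ideal.Quotient.eq_zero_iff_mem, Ideal.mem_span_singleton'] at h
  obtain ⟨B, hB⟩ := h
  have hX : (MvPowerSeries.X (0 : Fin 2) : MvPowerSeries (Fin 2) k) ≠ 0 := by
    intro h0
    have := congrArg (MvPowerSeries.coeff (Finsupp.single (0 : Fin 2) 1)) h0
    simp [MvPowerSeries.coeff_X] at this
  have hA : A = MvPowerSeries.X 0 * B := by
    apply mul_left_cancel₀ hX
    rw [← hB]; ring
  rw [hA, Ideal.mem_span_singleton]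
  exact ⟨Ideal.Quotient.mk _ B, by rw [ax, ← map_mul]⟩

lemma span_ax_kills (a : Ainf k) (ha : a ∈ Ideal.span {ax k})
    (m : (Ainf k) ⧸ (Ideal.span {ax k} : Ideal (Ainf k))) : a • m = 0 := by
  obtain ⟨b, rfl⟩ := Submodule.Quotient.mk_surjective _ m
  rw [← Submodule.Quotient.mk_smul, Submodule.Quotient.mk_eq_zero]
  exact Ideal.mul_mem_right b _ ha

end Aux

set_option maxHeartbeats 2000000 in
set_option synthInstance.maxHeartbeats 400000 in
/-- Let `R = k⟦x,y⟧/(x²)` where `k` is a field. Then the annihilator of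
the stable endomorphism module of `R/xR` equals the ideal `xR`. -/
theorem stmt6 (k : Type u) [Field k] :
    stAnn (Ainf k) ((Ainf k) ⧸ (Ideal.span {ax k} : Ideal (Ainf k)))
      = Ideal.span {ax k} := by
  apply le_antisymm
  · intro r hr
    have h0 := Module.mem_annihilator.mp hr
      (Submodule.Quotient.mk (LinearMap.id : _ →ₗ[Ainf k] _))
    change (Submodule.Quotient.mk (r • (LinearMap.id : _ →ₗ[Ainf k] _)) :
        (_ →ₗ[Ainf k] _) ⧸ projStable (Ainf k) _ _) = 0 at h0
    rw [Submodule.Quotient.mk_eq_zero] at h0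
    obtain ⟨P, _, _, hP, g, h, heq⟩ := h0
    obtain ⟨s, hs⟩ := hP.out
    set M := (Ainf k) ⧸ (Ideal.span {ax k} : Ideal (Ainf k))
    set m1 : M := Submodule.Quotient.mk 1 with hm1
    have hxg : ax k • g m1 = 0 := by
      rw [← map_smul, span_ax_kills k _ (Ideal.mem_span_singleton_self _) m1, map_zero]
    set c := s (g m1) with hc
    have hcoef : ∀ i, c i ∈ Ideal.span {ax k} := by
      intro i
      apply ax_mul_eq_zero k
      have hsc : ax k • c = 0 := by rw [hc, ← map_smul, hxg, map_zero]
      have h2 : ax k • c i = 0 := by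
        rw [← Finsupp.smul_apply, hsc, Finsupp.coe_zero, Pi.zero_apply]
      rw [← smul_eq_mul]; exact h2
    have hhg : h (g m1) = 0 := by
      have htot := hs (g m1)
      calc h (g m1) = h (Finsupp.linearCombination (Ainf k) id c) := by rw [htot]
        _ = c.sum fun i a => a • h i := by
            rw [Finsupp.linearCombination_apply, map_finsuppSum]
            simp
        _ = 0 := Finset.sum_eq_zero fun i _ => span_ax_kills k _ (hcoef i) (h i)
    have hr1 : r • m1 = 0 := by
      have := congrArg (fun f => f m1) heq
      simpa [hhg] using this
    rw [hm1, ← Submodule.Quotient.mk_smul, Submodule.Quotient.mk_eq_zero] at hr1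
    simpa using hr1
  · rw [Ideal.span_le, Set.singleton_subset_iff]
    apply Module.mem_annihilator.mpr
    intro m
    obtain ⟨f, rfl⟩ := Submodule.Quotient.mk_surjective _ m
    change (Submodule.Quotient.mk (ax k • f) :
        (_ →ₗ[Ainf k] _) ⧸ projStable (Ainf k) _ _) = 0
    rw [Submodule.Quotient.mk_eq_zero]
    have : ax k • f = 0 := by
      refine LinearMap.ext fun m => ?_
      exact span_ax_kills k _ (Ideal.mem_span_singleton_self _) (f m)
    rw [this]
    exact zero_mem _
end

section
/- Let R = k⟦x,y⟧/(x²) and for n ≥ 1 let φ_n be the 2×2 matrix ((x, y^n),(0, -x)) over R with M_n = coker φ_n. Then the annihilator of stableHom_R(M_n, M_n) equals the ideal (x, y^n)R. -/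
open CategoryTheory IsLocalRing

universe u

variable (R : Type u) [CommRing R]

section Aux

variable {R : Type u} [CommRing R]

lemma projStable_comp_left {M N Q : Type u} [AddCommGroup M] [Module R M]
    [AddCommGroup N] [Module R N] [AddCommGroup Q] [Module R Q]
    (f : N →ₗ[R] Q) {g : M →ₗ[R] N} (hg : g ∈ projStable R M N) :
    f.comp g ∈ projStable R M Q := by
  obtain ⟨P, _, _, _, a, b, rfl⟩ := hg
  exact ⟨P, inferInstance, inferInstance, inferInstance, a, f.comp b, by ext x; simp⟩

lemma mem_stAnn_iff {M : Type u} [AddCommGroup M] [Module R M] (r : R) :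
    r ∈ stAnn R M ↔ (r • (LinearMap.id : M →ₗ[R] M)) ∈ projStable R M M := by
  constructor
  · intro hr
    have h := Module.mem_annihilator.mp hr
      (Submodule.Quotient.mk (p := projStable R M M) LinearMap.id)
    change r • (Submodule.Quotient.mk LinearMap.id : (M →ₗ[R] M) ⧸ projStable R M M) = 0 at h
    rwa [← Submodule.Quotient.mk_smul, Submodule.Quotient.mk_eq_zero] at h
  · intro h
    rw [stAnn, Module.mem_annihilator]
    intro m
    obtain ⟨f, rfl⟩ := Submodule.Quotient.mk_surjective (projStable R M M) m
    show r • (Submodule.Quotient.mk f : (M →ₗ[R] M) ⧸ projStable R M M) = 0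
    rw [← Submodule.Quotient.mk_smul, Submodule.Quotient.mk_eq_zero]
    have hrf : r • f = f.comp (r • (LinearMap.id : M →ₗ[R] M)) := by ext x; simp
    rw [hrf]
    exact projStable_comp_left f h

/-- If `γ * Φ = 0` and `γ = r • 1 + Φ * δ`, then `r • id` on `coker Φ` factors
through the free module `Fin 2 → R`. -/
lemma smul_id_mem_projStable (Φ γ δ : Matrix (Fin 2) (Fin 2) R) (r : R)
    (h1 : γ * Φ = 0) (h2 : γ = r • (1 : Matrix (Fin 2) (Fin 2) R) + Φ * δ) :
    (r • (LinearMap.id : ((Fin 2 → R) ⧸ LinearMap.range (Matrix.toLin' Φ)) →ₗ[R]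
        ((Fin 2 → R) ⧸ LinearMap.range (Matrix.toLin' Φ)))) ∈
      projStable R ((Fin 2 → R) ⧸ LinearMap.range (Matrix.toLin' Φ))
        ((Fin 2 → R) ⧸ LinearMap.range (Matrix.toLin' Φ)) := by
  set N := LinearMap.range (Matrix.toLin' Φ) with hN
  have hker : N ≤ LinearMap.ker (Matrix.toLin' γ) := by
    rintro _ ⟨v, rfl⟩
    have : Matrix.toLin' γ (Matrix.toLin' Φ v) = Matrix.toLin' (γ * Φ) v := by
      rw [Matrix.toLin'_mul, LinearMap.comp_apply]
    simp only [LinearMap.mem_ker, this, h1, map_zero, LinearMap.zero_apply]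
  refine ⟨Fin 2 → R, inferInstance, inferInstance, inferInstance,
    N.liftQ (Matrix.toLin' γ) hker, N.mkQ, ?_⟩
  apply Submodule.linearMap_qext
  refine LinearMap.ext fun v => ?_
  show r • N.mkQ v = N.mkQ (Matrix.toLin' γ v)
  rw [Submodule.mkQ_apply, Submodule.mkQ_apply, ← Submodule.Quotient.mk_smul,
    Submodule.Quotient.eq]
  have hγ : Matrix.toLin' γ v = r • v + Matrix.toLin' Φ (Matrix.toLin' δ v) := by
    rw [h2, map_add, LinearMap.add_apply, ← Matrix.toLin'_mul_apply]
    congr 1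
    rw [map_smul, Matrix.toLin'_one]
    rfl
  rw [hγ]
  have : r • v - (r • v + Matrix.toLin' Φ (Matrix.toLin' δ v))
      = -(Matrix.toLin' Φ (Matrix.toLin' δ v)) := by abel
  rw [this]
  exact N.neg_mem ⟨Matrix.toLin' δ v, rfl⟩

end Aux

section Ring

variable (k : Type u) [Field k]

lemma ax_sq : ax k * ax k = 0 := by
  rw [ax, ← map_mul, ← pow_two, Ideal.Quotient.eq_zero_iff_mem]
  exact Ideal.subset_span rfl

lemma mem_span_ax {s : Ainf k} (h : ax k * s = 0) : s ∈ Ideal.span {ax k} := by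
  obtain ⟨F, rfl⟩ := Ideal.Quotient.mk_surjective s
  rw [ax, ← map_mul, Ideal.Quotient.eq_zero_iff_mem, Ideal.mem_span_singleton] at h
  obtain ⟨G, hG⟩ := h
  rw [pow_two, mul_assoc] at hG
  have hX : (MvPowerSeries.X 0 : MvPowerSeries (Fin 2) k) ≠ 0 := by
    intro h0
    have h1 := MvPowerSeries.coeff_index_single_self_X (R := k) (0 : Fin 2)
    rw [h0, map_zero] at h1
    exact one_ne_zero h1.symm
  have hF : F = MvPowerSeries.X 0 * G := mul_left_cancel₀ hX hG
  rw [hF, map_mul]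
  exact Ideal.mem_span_singleton.mpr ⟨Ideal.Quotient.mk _ G, rfl⟩

end Ring


section MatAux
variable {R : Type u} [CommRing R]

lemma stmt7_m1 (x y : R) (hsq : x * x = 0) : !![x, y; 0, 0] * !![x, y; 0, -x] = 0 := by
  ext i j
  fin_cases i <;> fin_cases j <;> simp [Matrix.mul_apply, Fin.sum_univ_two] <;>
    first | assumption | ring

lemma stmt7_m2 (x y : R) :
    !![x, y; 0, 0] = x • (1 : Matrix (Fin 2) (Fin 2) R) + !![x, y; 0, -x] * !![0, 0; 0, 1] := by
  ext i j
  fin_cases i <;> fin_cases j <;>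
    simp [Matrix.mul_apply, Fin.sum_univ_two, Matrix.one_apply]

lemma stmt7_m3 (x y : R) (hsq : x * x = 0) : !![0, 0; x, y] * !![x, y; 0, -x] = 0 := by
  ext i j
  fin_cases i <;> fin_cases j <;> simp [Matrix.mul_apply, Fin.sum_univ_two] <;>
    first | assumption | ring

lemma stmt7_m4 (x y : R) :
    !![0, 0; x, y] = y • (1 : Matrix (Fin 2) (Fin 2) R) + !![x, y; 0, -x] * !![0, 0; -1, 0] := by
  ext i j
  fin_cases i <;> fin_cases j <;>
    simp [Matrix.mul_apply, Fin.sum_univ_two, Matrix.one_apply]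

end MatAux

set_option maxHeartbeats 1600000 in
set_option synthInstance.maxHeartbeats 400000 in
/-- Let `R = k⟦x,y⟧/(x²)` (char k ≠ 2) and for `n ≥ 1` let `φₙ` be the
matrix `((x, yⁿ),(0, -x))`, with `Mₙ = coker φₙ`. Then the annihilator of
`stableHom(Mₙ, Mₙ)` equals the ideal `(x, yⁿ)R`. -/
theorem stmt7 (k : Type u) [Field k] (hchar : ringChar k ≠ 2) (n : ℕ) (hn : 1 ≤ n) :
    stAnn (Ainf k) ((Fin 2 → Ainf k) ⧸
        LinearMap.range (Matrix.toLin' !![ax k, ay k ^ n; 0, -ax k]))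
      = Ideal.span {ax k, ay k ^ n} := by
  set x := ax k with hx
  set y := ay k ^ n with hy
  set Φ : Matrix (Fin 2) (Fin 2) (Ainf k) := !![x, y; 0, -x] with hΦ
  set N := LinearMap.range (Matrix.toLin' Φ) with hNdef
  have hsq : x * x = 0 := ax_sq k
  apply le_antisymm
  · -- hard direction
    intro r hr
    have hid := (mem_stAnn_iff r).mp hr
    obtain ⟨P, _, _, _, g, h, heq⟩ := hid
    obtain ⟨H, hH⟩ := Module.projective_lifting_property N.mkQ h (Submodule.mkQ_surjective N)
    set A := (H.comp g).comp N.mkQ with hA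
    set e0 : Fin 2 → Ainf k := ![1, 0] with he0
    have hφe0 : Matrix.toLin' Φ e0 = x • e0 := by
      funext i
      fin_cases i <;>
        simp [Matrix.toLin'_apply, Matrix.mulVec, dotProduct, Fin.sum_univ_two, hΦ, he0]
    have hA0 : A (Matrix.toLin' Φ e0) = 0 := by
      have hz : N.mkQ (Matrix.toLin' Φ e0) = 0 := by
        rw [Submodule.mkQ_apply, Submodule.Quotient.mk_eq_zero]
        exact ⟨e0, rfl⟩
      show H (g (N.mkQ (Matrix.toLin' Φ e0))) = 0
      rw [hz, map_zero, map_zero]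
    have hxA : x • A e0 = 0 := by rw [← A.map_smul, ← hφe0, hA0]
    have hmk : N.mkQ (A e0) = r • N.mkQ e0 := by
      have h1 : N.mkQ (A e0) = (N.mkQ.comp H) (g (N.mkQ e0)) := rfl
      rw [h1, hH]
      have h2 : h (g (N.mkQ e0)) = (h.comp g) (N.mkQ e0) := rfl
      rw [h2, ← heq]
      rfl
    have hsub : A e0 - r • e0 ∈ N := by
      have hz : N.mkQ (A e0 - r • e0) = 0 := by
        rw [map_sub, hmk, map_smul, sub_self]
      rwa [Submodule.mkQ_apply, Submodule.Quotient.mk_eq_zero] at hz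
    obtain ⟨w, hw⟩ := hsub
    have h0 := congrFun hw 0
    have hl : Matrix.toLin' Φ w 0 = x * w 0 + y * w 1 := by
      simp [Matrix.toLin'_apply, Matrix.mulVec, dotProduct, Fin.sum_univ_two, hΦ] <;> rfl
    have hr0 : (A e0 - r • e0) 0 = A e0 0 - r := by
      simp [he0]
    have hw0 : x * w 0 + y * w 1 = A e0 0 - r := by rw [← hl, h0, hr0]
    have hx0 : x * A e0 0 = 0 := by
      have hc := congrFun hxA 0
      simpa using hc
    have hkey : x * (r + y * w 1) = 0 := by
      linear_combination x * hw0 + hx0 - w 0 * hsq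
    obtain ⟨c, hc⟩ := Ideal.mem_span_singleton'.mp (mem_span_ax k hkey)
    rw [Ideal.mem_span_pair]
    exact ⟨c, -(w 1), by rw [hy]; linear_combination hc⟩
  · -- easy direction
    rw [Ideal.span_le]
    rintro s hs
    simp only [Set.mem_insert_iff, Set.mem_singleton_iff] at hs
    rcases hs with rfl | rfl
    · rw [SetLike.mem_coe, mem_stAnn_iff]
      exact smul_id_mem_projStable Φ !![x, y; 0, 0] !![0, 0; 0, 1] x
        (stmt7_m1 x y hsq) (stmt7_m2 x y)
    · rw [SetLike.mem_coe, mem_stAnn_iff]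
      exact smul_id_mem_projStable Φ !![0, 0; x, y] !![0, 0; -1, 0] y
        (stmt7_m3 x y hsq) (stmt7_m4 x y)
end

section
/- Let (R,m) be a local ring of depth zero that is not artinian, and let Γ_m(R) be the m-torsion submodule of R. Then ⋂_{n>0} ((0 :_R m^n) + m^n) ⊆ Γ_m(R); in particular, this intersection is not an m-primary ideal. -/
open CategoryTheory IsLocalRing

universe u

variable (R : Type u) [CommRing R]

section Aux

variable {A : Type u} [CommRing A]

/-- If the action of `A` on `M` factors through `A ⧸ I`, artinianness descends. -/
theorem isArtinian_of_quotient_action (I : Ideal A) (M : Type u) [AddCommGroup M]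
    [Module A M] [Module (A ⧸ I) M] [IsScalarTower A (A ⧸ I) M]
    (h : IsArtinian (A ⧸ I) M) : IsArtinian A M := by
  rw [isArtinian_iff]
  let f : Submodule A M → Submodule (A ⧸ I) M := fun N =>
    { carrier := N
      add_mem' := fun ha hb => N.add_mem ha hb
      zero_mem' := N.zero_mem
      smul_mem' := by
        rintro c x hx
        obtain ⟨r, rfl⟩ := Ideal.Quotient.mk_surjective c
        have : (Ideal.Quotient.mk I r) • x = r • x := by
          rw [← Ideal.Quotient.algebraMap_eq, algebraMap_smul]
        rw [this]
        exact N.smul_mem r hx }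
  have hf : StrictMono f := fun N₁ N₂ h12 => by
    rw [SetLike.lt_iff_le_and_exists] at h12 ⊢
    obtain ⟨hle, x, hx1, hx2⟩ := h12
    exact ⟨hle, x, hx1, hx2⟩
  exact (hf.wellFoundedLT).wf

/-- A finite module over a local ring killed by the maximal ideal is artinian. -/
theorem isArtinian_of_torsionBy_maximalIdeal [IsLocalRing A] (M : Type u) [AddCommGroup M]
    [Module A M] [Module.Finite A M]
    (h : Module.IsTorsionBySet A M (maximalIdeal A : Set A)) : IsArtinian A M := by
  letI : Module (A ⧸ maximalIdeal A) M := h.module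
  haveI : IsScalarTower A (A ⧸ maximalIdeal A) M := h.isScalarTower
  letI : Field (A ⧸ maximalIdeal A) := Ideal.Quotient.field _
  haveI : IsArtinianRing (A ⧸ maximalIdeal A) := DivisionRing.instIsArtinianRing
  haveI : Module.Finite (A ⧸ maximalIdeal A) M :=
    Module.Finite.of_restrictScalars_finite A _ _
  exact isArtinian_of_quotient_action (maximalIdeal A) M inferInstance

/-- Hopkins: a noetherian local ring with nilpotent maximal ideal is artinian. -/
theorem isArtinianRing_of_pow_maximalIdeal_eq_bot [IsNoetherianRing A] [IsLocalRing A]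
    {K : ℕ} (h : (maximalIdeal A) ^ K = ⊥) : IsArtinianRing A := by
  have H : ∀ i : ℕ, IsArtinian A (A ⧸ (maximalIdeal A ^ i : Ideal A)) := by
    intro i
    induction i with
    | zero =>
      have : (maximalIdeal A ^ 0 : Ideal A) = ⊤ := by rw [pow_zero, Ideal.one_eq_top]
      haveI : Subsingleton (A ⧸ (maximalIdeal A ^ 0 : Ideal A)) :=
        Submodule.Quotient.subsingleton_iff.mpr this
      infer_instance
    | succ i ih =>
      set S : Ideal A := maximalIdeal A ^ (i + 1) with hS
      set T : Ideal A := maximalIdeal A ^ i with hT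
      have hST : S ≤ T := Ideal.pow_le_pow_right (Nat.le_succ i)
      rw [isArtinian_iff_submodule_quotient
        (Submodule.map (S : Submodule A A).mkQ (T : Submodule A A))]
      constructor
      · apply isArtinian_of_torsionBy_maximalIdeal
        · rintro ⟨x, hx⟩ ⟨a, ha⟩
          obtain ⟨t, ht, rfl⟩ := hx
          apply Subtype.ext
          show a • Submodule.Quotient.mk t = 0
          rw [← Submodule.Quotient.mk_smul, Submodule.Quotient.mk_eq_zero]
          have : a • t = t * a := by rw [smul_eq_mul, mul_comm]
          rw [this]
          show t * a ∈ maximalIdeal A ^ (i + 1)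
          rw [pow_succ]
          exact Ideal.mul_mem_mul ht ha
      · exact isArtinian_of_linearEquiv
          (Submodule.quotientQuotientEquivQuotient (S : Submodule A A) T hST).symm
  rw [isArtinianRing_iff]
  exact isArtinian_of_linearEquiv
    (Submodule.quotEquivOfEqBot (maximalIdeal A ^ K : Ideal A) h)

end Aux

/-- Let `(R,m)` be a noetherian local ring of depth zero (every element
of `m` is a zerodivisor) which is not artinian. Then
`⋂_{n>0} ((0 :_R mⁿ) + mⁿ) ⊆ Γ_m(R)`, and in particular this intersection is not
`m`-primary. -/
theorem stmt11 [IsNoetherianRing R] [IsLocalRing R]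
    (hdepth : ∀ a ∈ maximalIdeal R, ∃ b : R, b ≠ 0 ∧ a * b = 0)
    (hart : ¬ IsArtinianRing R) :
    ((⨅ (n : ℕ) (_ : 0 < n),
        ((⊥ : Ideal R).colon (((maximalIdeal R) ^ n : Ideal R) : Set R) + (maximalIdeal R) ^ n))
      ≤ ⨆ n : ℕ, (⊥ : Ideal R).colon (((maximalIdeal R) ^ n : Ideal R) : Set R)) ∧
    (⨅ (n : ℕ) (_ : 0 < n),
        ((⊥ : Ideal R).colon (((maximalIdeal R) ^ n : Ideal R) : Set R) + (maximalIdeal R) ^ n)).radical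
      ≠ maximalIdeal R := by

  set J : Ideal R := ⨆ n : ℕ, (⊥ : Ideal R).colon (((maximalIdeal R) ^ n : Ideal R) : Set R) with hJ
  have hm : maximalIdeal R ≠ ⊤ := (maximalIdeal.isMaximal R).ne_top
  -- Part 1
  have part1 : (⨅ (n : ℕ) (_ : 0 < n),
      ((⊥ : Ideal R).colon (((maximalIdeal R) ^ n : Ideal R) : Set R) + (maximalIdeal R) ^ n)) ≤ J := by
    intro x hx
    have hbot : (⨅ i : ℕ, (maximalIdeal R) ^ i • ⊤ :
        Submodule R (R ⧸ (J : Submodule R R))) = ⊥ :=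
      Ideal.iInf_pow_smul_eq_bot_of_isLocalRing (maximalIdeal R) (M := R ⧸ (J : Submodule R R)) hm
    have hmem : Submodule.Quotient.mk x ∈ (⨅ i : ℕ, (maximalIdeal R) ^ i • ⊤ :
        Submodule R (R ⧸ (J : Submodule R R))) := by
      rw [Submodule.mem_iInf]
      intro i
      rcases Nat.eq_zero_or_pos i with hi | hi
      · subst hi; simp
      · have h1 := (Submodule.mem_iInf _).mp hx i
        have h2 := (Submodule.mem_iInf _).mp h1 hi
        rw [Ideal.add_eq_sup, Submodule.mem_sup] at h2
        obtain ⟨a, ha, b, hb, rfl⟩ := h2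
        have haJ : a ∈ J := le_iSup (fun n => (⊥ : Ideal R).colon (((maximalIdeal R) ^ n : Ideal R) : Set R)) i ha
        have : (Submodule.Quotient.mk (a + b) : R ⧸ (J : Submodule R R)) =
            Submodule.Quotient.mk b := by
          rw [Submodule.Quotient.eq]
          simpa using haJ
        rw [this]
        have : (Submodule.Quotient.mk b : R ⧸ (J : Submodule R R)) =
            b • Submodule.Quotient.mk 1 := by
          rw [← Submodule.Quotient.mk_smul, smul_eq_mul, mul_one]
        rw [this]
        exact Submodule.smul_mem_smul hb Submodule.mem_top
    rw [hbot, Submodule.mem_bot] at hmem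
    exact (Submodule.Quotient.mk_eq_zero (J : Submodule R R)).mp hmem
  refine ⟨part1, ?_⟩
  -- Part 2
  intro hrad
  -- the colon chain stabilizes
  obtain ⟨N, hN⟩ := monotone_stabilizes_iff_noetherian.mpr
    (inferInstance : IsNoetherian R R)
    ⟨fun n => ((⊥ : Ideal R).colon (((maximalIdeal R) ^ n : Ideal R) : Set R) : Submodule R R), by
      intro a b hab x hxa
      rw [Submodule.mem_colon] at hxa ⊢
      exact fun p hp => hxa p (Ideal.pow_le_pow_right hab hp)⟩
  have hJN : J = (⊥ : Ideal R).colon (((maximalIdeal R) ^ N : Ideal R) : Set R) := by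
    apply le_antisymm
    · apply iSup_le
      intro i
      rcases le_total i N with h | h
      · intro x hxa
        rw [Submodule.mem_colon] at hxa ⊢
        exact fun p hp => hxa p (Ideal.pow_le_pow_right h hp)
      · exact (hN i h).ge
    · rw [hJ]; exact le_iSup (fun n : ℕ => (⊥ : Ideal R).colon (((maximalIdeal R) ^ n : Ideal R) : Set R)) N
  -- m^k ≤ I for some k
  have hfg : (⨅ (n : ℕ) (_ : 0 < n),
      ((⊥ : Ideal R).colon (((maximalIdeal R) ^ n : Ideal R) : Set R) + (maximalIdeal R) ^ n)).radical.FG := by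
    rw [hrad]; exact IsNoetherian.noetherian _
  obtain ⟨k, hk⟩ := Ideal.exists_radical_pow_le_of_fg _ hfg
  rw [hrad] at hk
  have hkJ : (maximalIdeal R) ^ k ≤ (⊥ : Ideal R).colon (((maximalIdeal R) ^ N : Ideal R) : Set R) :=
    le_trans hk (le_trans part1 hJN.le)
  have hnil : (maximalIdeal R) ^ (k + N) = ⊥ := by
    rw [pow_add]
    rw [eq_bot_iff, Ideal.mul_le]
    intro a ha b hb
    have := (Submodule.mem_colon.mp (hkJ ha)) b hb
    simpa using this
  exact hart (isArtinianRing_of_pow_maximalIdeal_eq_bot hnil)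
end

section
/- Let (R,m) be a local ring of depth zero and M a finitely generated R-module. For n > 0, if a ∈ R annihilates stableHom_R(R/m^n, R/m^n), then a ∈ (0 :_R m^n) + m^n. -/
open CategoryTheory IsLocalRing

universe u

variable (R : Type u) [CommRing R]

/-- Let `(R,m)` be a noetherian local ring of depth zero. For `n > 0`,
if `a ∈ R` annihilates `stableHom_R(R/mⁿ, R/mⁿ)`, then `a ∈ (0 :_R mⁿ) + mⁿ`. -/
theorem stmt12 [IsNoetherianRing R] [IsLocalRing R]
    (hdepth : ∀ a ∈ maximalIdeal R, ∃ b : R, b ≠ 0 ∧ a * b = 0)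
    (n : ℕ) (hn : 0 < n) (a : R)
    (ha : a ∈ stAnn R (R ⧸ ((maximalIdeal R) ^ n : Ideal R))) :
    a ∈ (⊥ : Ideal R).colon (((maximalIdeal R) ^ n : Ideal R) : Set R) + (maximalIdeal R) ^ n := by
  set I : Ideal R := (maximalIdeal R) ^ n with hI
  set M := R ⧸ I with hM
  have smul_mk : ∀ (r x : R), r • (Ideal.Quotient.mk I x) = Ideal.Quotient.mk I (r * x) :=
    fun r x => rfl
  have hann : a • (Submodule.Quotient.mk (p := projStable R M M) LinearMap.id) = 0 :=
    Module.mem_annihilator.mp ha _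
  have hmem : (a • (LinearMap.id : M →ₗ[R] M)) ∈ projStable R M M := by
    rwa [← Submodule.Quotient.mk_smul, Submodule.Quotient.mk_eq_zero] at hann
  obtain ⟨P, _, _, hP, g, h, hfact⟩ := hmem
  obtain ⟨s, hs⟩ := hP.out
  set x : P := g (Ideal.Quotient.mk I 1) with hx
  set y : P →₀ R := s x with hy
  -- coefficients of y are killed by I
  have hkill : ∀ c ∈ I, ∀ p : P, c * y p = 0 := by
    intro c hc p
    have hx0 : c • x = 0 := by
      rw [hx, ← map_smul, smul_mk, mul_one, Ideal.Quotient.eq_zero_iff_mem.mpr hc, map_zero]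
    have hy0 : c • y = 0 := by rw [hy, ← map_smul, hx0, map_zero]
    calc c * y p = (c • y) p := rfl
      _ = 0 := by rw [hy0]; rfl
  -- lift h p to R
  choose lift hlift using fun p => Ideal.Quotient.mk_surjective (I := I) (h p)
  set t : R := y.sum fun p r => r * lift p with htd
  have ht : t ∈ (⊥ : Ideal R).colon I := by
    rw [htd]
    apply Submodule.sum_mem
    intro p hp
    rw [Submodule.mem_colon]
    intro c hc
    simp only [smul_eq_mul, Submodule.mem_bot]
    show y p * lift p * c = 0
    rw [mul_right_comm, mul_comm (y p) c, hkill c hc p, zero_mul]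
  have h2 := LinearMap.congr_fun hfact (Ideal.Quotient.mk I 1)
  simp only [LinearMap.smul_apply, LinearMap.id_coe, id_eq, LinearMap.comp_apply] at h2
  have hat : a - t ∈ I := by
    rw [← Ideal.Quotient.eq_zero_iff_mem, map_sub, sub_eq_zero]
    calc Ideal.Quotient.mk I a = a • Ideal.Quotient.mk I 1 := by rw [smul_mk, mul_one]
      _ = h x := h2
      _ = h (Finsupp.linearCombination R id y) := by rw [hy, hs x]
      _ = y.sum (fun p r => r • h p) := by
          rw [Finsupp.linearCombination_apply, map_finsuppSum]
          exact Finsupp.sum_congr fun p hp => by rw [map_smul, id_eq]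
      _ = Ideal.Quotient.mk I t := by
          rw [htd, map_finsuppSum]
          exact Finsupp.sum_congr fun p hp => by rw [← hlift p, smul_mk]
  have hsplit : a = t + (a - t) := by ring
  rw [hsplit]
  exact Submodule.add_mem_sup ht hat
end
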